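/- Fix M > 0 and let φ₁ denote the density of the standard normal distribution. Then there exist C > 0 and ε₀ > 0 such that for all 0 < ε < ε₀ and all a ∈ ℝ with |a| ≤ M: | ∫_{{z : az ≤ 0}} z² e^{−a √ε z} φ₁(z) dz + ∫_{{z : az > 0}} z² φ₁(z) dz − 1 | ≤ C √ε. -/

import Mathlib

open MeasureTheory

/-- Density of the standard normal distribution. -/
noncomputable def stdGaussDensity (z : ℝ) : ℝ :=
  (Real.sqrt (2 * Real.pi))⁻¹ * Real.exp (-z ^ 2 / 2)

-- basic cube bound
lemma cube_le_exp {t : ℝ} (ht : 0 ≤ t) : t ^ 3 ≤ 27 * Real.exp t := by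
  have h1 : t / 3 + 1 ≤ Real.exp (t / 3) := Real.add_one_le_exp _
  have h2 : (t / 3) ^ 3 ≤ (Real.exp (t / 3)) ^ 3 := by
    apply pow_le_pow_left₀ (by positivity) (by linarith) 3
  have h3 : (Real.exp (t / 3)) ^ 3 = Real.exp t := by
    rw [← Real.exp_nat_mul]; congr 1; push_cast; ring
  nlinarith [h2, h3]

lemma master_bound (z : ℝ) :
    (1 + |z| ^ 3) * Real.exp |z| * Real.exp (-z ^ 2 / 2)
      ≤ 28 * Real.exp 4 * Real.exp (-(1/4) * z ^ 2) := by
  set t := |z| with ht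
  have ht0 : 0 ≤ t := abs_nonneg z
  have htz : t ^ 2 = z ^ 2 := sq_abs z
  have h1 : 1 + t ^ 3 ≤ 28 * Real.exp t := by
    have := cube_le_exp ht0
    have h2 : (1:ℝ) ≤ Real.exp t := Real.one_le_exp ht0
    linarith
  have e1 := (Real.exp_pos t).le
  have e2 := (Real.exp_pos (-z ^ 2 / 2)).le
  have key : (1 + t ^ 3) * Real.exp t * Real.exp (-z ^ 2 / 2)
      ≤ 28 * Real.exp t * Real.exp t * Real.exp (-z ^ 2 / 2) :=
    mul_le_mul_of_nonneg_right (mul_le_mul_of_nonneg_right h1 e1) e2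
  have h3 : 28 * Real.exp t * Real.exp t * Real.exp (-z ^ 2 / 2)
      = 28 * Real.exp (2 * t - z ^ 2 / 2) := by
    rw [show (2:ℝ) * t - z ^ 2 / 2 = t + (t + -z^2/2) by ring, Real.exp_add, Real.exp_add]
    ring
  have h4 : Real.exp (2 * t - z ^ 2 / 2) ≤ Real.exp (4 + -(1/4) * z ^ 2) := by
    apply Real.exp_le_exp.2
    nlinarith [sq_nonneg (t - 4)]
  have h5 : 28 * Real.exp (2 * t - z ^ 2 / 2) ≤ 28 * Real.exp (4 + -(1/4) * z ^ 2) := by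
    linarith
  have h6 : (28:ℝ) * Real.exp (4 + -(1/4) * z ^ 2)
      = 28 * Real.exp 4 * Real.exp (-(1/4) * z ^ 2) := by
    rw [Real.exp_add]; ring
  linarith [key, h3 ▸ key, h5]
  
lemma master_integrable :
    Integrable (fun z : ℝ => (1 + |z| ^ 3) * Real.exp |z| * Real.exp (-z ^ 2 / 2)) := by
  apply Integrable.mono' ((integrable_exp_neg_mul_sq (by norm_num : (0:ℝ) < 1/4)).const_mul
    (28 * Real.exp 4))
  · apply Continuous.aestronglyMeasurable
    fun_prop
  · filter_upwards with z
    rw [Real.norm_eq_abs, abs_of_nonneg (by positivity)]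
    exact master_bound z

lemma integrable_E : Integrable (fun z : ℝ => Real.exp (-z ^ 2 / 2)) := by
  have : (fun z : ℝ => Real.exp (-z ^ 2 / 2)) = fun z => Real.exp (-(1/2) * z ^ 2) := by
    funext z; ring_nf
  rw [this]
  exact integrable_exp_neg_mul_sq (by norm_num)

lemma integrable_P : Integrable (fun z : ℝ => z ^ 2 * Real.exp (-z ^ 2 / 2)) := by
  apply Integrable.mono' master_integrable
  · apply Continuous.aestronglyMeasurable; fun_prop
  · filter_upwards with z
    rw [Real.norm_eq_abs, abs_of_nonneg (by positivity)]
    have h1 : z ^ 2 ≤ 1 + |z| ^ 3 := by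
      rcases le_or_gt (|z|) 1 with h | h
      · nlinarith [sq_abs z, abs_nonneg z]
      · nlinarith [sq_abs z, abs_nonneg z]
    have h2 : (1:ℝ) ≤ Real.exp |z| := Real.one_le_exp (abs_nonneg z)
    calc z ^ 2 * Real.exp (-z ^ 2 / 2)
        ≤ (1 + |z| ^ 3) * Real.exp (-z ^ 2 / 2) :=
          mul_le_mul_of_nonneg_right h1 (Real.exp_pos _).le
      _ = (1 + |z| ^ 3) * Real.exp (-z ^ 2 / 2) * 1 := by ring
      _ ≤ (1 + |z| ^ 3) * Real.exp (-z ^ 2 / 2) * Real.exp |z| :=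
          mul_le_mul_of_nonneg_left h2 (by positivity)
      _ = (1 + |z| ^ 3) * Real.exp |z| * Real.exp (-z ^ 2 / 2) := by ring

lemma exp_moment : ∫ z : ℝ, z ^ 2 * Real.exp (-z ^ 2 / 2) = Real.sqrt (2 * Real.pi) := by
  set E : ℝ → ℝ := fun z => Real.exp (-z ^ 2 / 2) with hE
  set P : ℝ → ℝ := fun z => z ^ 2 * Real.exp (-z ^ 2 / 2) with hP
  -- integration by parts on Ioi 0
  have hderiv : ∀ x ∈ Set.Ioi (0:ℝ), HasDerivAt (fun x => -x * E x) (P x - E x) x := by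
    intro x _
    have hInner : HasDerivAt (fun x : ℝ => -x ^ 2 / 2) (-x) x := by
      have := ((hasDerivAt_pow 2 x).neg).div_const 2
      exact this.congr_deriv (by norm_num; ring)
    have hExp : HasDerivAt E (E x * (-x)) x := hInner.exp
    have := ((hasDerivAt_id x).neg.mul hExp)
    exact this.congr_deriv (by simp only [hP, hE, id, Pi.neg_apply]; ring)
  have htend : Filter.Tendsto (fun x => -x * E x) Filter.atTop (nhds 0) := by
    have h := rpow_mul_exp_neg_mul_sq_isLittleO_exp_neg (by norm_num : (0:ℝ) < 1/2) 1
    have h2 : Filter.Tendsto (fun x : ℝ => x ^ (1:ℝ) * Real.exp (-(1/2) * x ^ 2))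
        Filter.atTop (nhds 0) := by
      apply h.isBigO.trans_tendsto
      apply Real.tendsto_exp_atBot.comp
      exact Filter.Tendsto.const_mul_atTop_of_neg (by norm_num) Filter.tendsto_id
    have h3 : (fun x : ℝ => x ^ (1:ℝ) * Real.exp (-(1/2) * x ^ 2))
        = fun x => x * E x := by
      funext x; rw [Real.rpow_one]; congr 1; simp only [hE]; ring_nf
    rw [h3] at h2
    simpa using h2.neg
  have hparts : ∫ x in Set.Ioi (0:ℝ), (P x - E x) = 0 - (-0 * E 0) := by
    apply integral_Ioi_of_hasDerivAt_of_tendsto _ hderiv _ htend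
    · apply Continuous.continuousWithinAt; fun_prop
    · exact (integrable_P.sub integrable_E).integrableOn
  have hPE : ∫ x in Set.Ioi (0:ℝ), P x = ∫ x in Set.Ioi (0:ℝ), E x := by
    have := integral_sub (integrable_P.integrableOn (s := Set.Ioi (0:ℝ)))
      (integrable_E.integrableOn (s := Set.Ioi (0:ℝ)))
    simp only [neg_zero, zero_mul, sub_zero] at hparts
    rw [hparts] at this
    linarith [this]
  -- symmetry
  have hsymP : ∫ x in Set.Iic (0:ℝ), P x = ∫ x in Set.Ioi (0:ℝ), P x := by
    have h := integral_comp_neg_Iic (0:ℝ) P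
    rw [neg_zero] at h
    rw [← h]
    apply setIntegral_congr_fun measurableSet_Iic
    intro x _
    simp only [hP]
    rw [show ((-x:ℝ)) ^ 2 = x ^ 2 by ring]
  have hsymE : ∫ x in Set.Iic (0:ℝ), E x = ∫ x in Set.Ioi (0:ℝ), E x := by
    have h := integral_comp_neg_Iic (0:ℝ) E
    rw [neg_zero] at h
    rw [← h]
    apply setIntegral_congr_fun measurableSet_Iic
    intro x _
    simp only [hE]
    rw [show ((-x:ℝ)) ^ 2 = x ^ 2 by ring]
  have hsplitP := intervalIntegral.integral_Iic_add_Ioi (b := (0:ℝ)) integrable_P.integrableOn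
    integrable_P.integrableOn
  have hsplitE := intervalIntegral.integral_Iic_add_Ioi (b := (0:ℝ)) integrable_E.integrableOn
    integrable_E.integrableOn
  have hEval : ∫ x : ℝ, E x = Real.sqrt (2 * Real.pi) := by
    have : (fun z : ℝ => Real.exp (-z ^ 2 / 2)) = fun z => Real.exp (-(1/2) * z ^ 2) := by
      funext z; ring_nf
    rw [hE, this, integral_gaussian]
    norm_num [mul_comm]
  show (∫ x : ℝ, P x) = _
  calc ∫ x : ℝ, P x = (∫ x in Set.Iic (0:ℝ), P x) + ∫ x in Set.Ioi (0:ℝ), P x := hsplitP.symm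
    _ = (∫ x in Set.Iic (0:ℝ), E x) + ∫ x in Set.Ioi (0:ℝ), E x := by
        rw [hsymP, hsymE, hPE]
    _ = ∫ x : ℝ, E x := hsplitE
    _ = Real.sqrt (2 * Real.pi) := hEval

@[fun_prop]
lemma continuous_stdGaussDensity : Continuous stdGaussDensity := by
  unfold stdGaussDensity; fun_prop

lemma stdGauss_nonneg (z : ℝ) : 0 ≤ stdGaussDensity z := by
  unfold stdGaussDensity; positivity

lemma stdGauss_le (z : ℝ) : stdGaussDensity z ≤ Real.exp (-z ^ 2 / 2) := by
  unfold stdGaussDensity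
  have h1 : (1:ℝ) ≤ Real.sqrt (2 * Real.pi) := by
    rw [show (1:ℝ) = Real.sqrt 1 by simp]
    apply Real.sqrt_le_sqrt
    nlinarith [Real.pi_gt_three]
  have h2 : (Real.sqrt (2 * Real.pi))⁻¹ ≤ 1 := by
    apply inv_le_one_of_one_le₀ h1
  nlinarith [Real.exp_pos (-z ^ 2 / 2)]

lemma sqrt_two_pi_pos : 0 < Real.sqrt (2 * Real.pi) := by
  apply Real.sqrt_pos.2; positivity

lemma stdGauss_moment : ∫ z : ℝ, z ^ 2 * stdGaussDensity z = 1 := by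
  have h : (fun z : ℝ => z ^ 2 * stdGaussDensity z)
      = fun z => (Real.sqrt (2 * Real.pi))⁻¹ * (z ^ 2 * Real.exp (-z ^ 2 / 2)) := by
    funext z; unfold stdGaussDensity; ring
  rw [h, integral_const_mul, exp_moment, inv_mul_cancel₀ sqrt_two_pi_pos.ne']

lemma integrable_sq_gauss : Integrable (fun z : ℝ => z ^ 2 * stdGaussDensity z) := by
  have h : (fun z : ℝ => z ^ 2 * stdGaussDensity z)
      = fun z => (Real.sqrt (2 * Real.pi))⁻¹ * (z ^ 2 * Real.exp (-z ^ 2 / 2)) := by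
    funext z; unfold stdGaussDensity; ring
  rw [h]; exact integrable_P.const_mul _

lemma integrable_G :
    Integrable (fun z : ℝ => (1 + |z| ^ 3) * Real.exp |z| * stdGaussDensity z) := by
  have h : (fun z : ℝ => (1 + |z| ^ 3) * Real.exp |z| * stdGaussDensity z)
      = fun z => (Real.sqrt (2 * Real.pi))⁻¹
          * ((1 + |z| ^ 3) * Real.exp |z| * Real.exp (-z ^ 2 / 2)) := by
    funext z; unfold stdGaussDensity; ring
  rw [h]; exact master_integrable.const_mul _

lemma sq_le_one_add_abs_cube (z : ℝ) : z ^ 2 ≤ 1 + |z| ^ 3 := by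
  rcases le_or_gt (|z|) 1 with h | h
  · nlinarith [sq_abs z, abs_nonneg z]
  · nlinarith [sq_abs z, abs_nonneg z]

lemma exp_sub_one_le_mul {t : ℝ} (ht : 0 ≤ t) : Real.exp t - 1 ≤ t * Real.exp t := by
  have hm : Real.exp (-t) * Real.exp t = 1 := by rw [← Real.exp_add]; simp
  nlinarith [Real.add_one_le_exp (-t), Real.exp_pos t]

/-- Core Gaussian second-moment (volatility) computation: uniformly in `|a| ≤ M`,
`∫_{az≤0} z² e^{−a√ε z} φ₁(z) dz + ∫_{az>0} z² φ₁(z) dz = 1 + O(√ε)`. -/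
theorem gaussian_volatility_integral (M : ℝ) (hM : 0 < M) :
    ∃ C > (0:ℝ), ∃ ε₀ > (0:ℝ), ∀ ε a : ℝ, 0 < ε → ε < ε₀ → |a| ≤ M →
      |(∫ z in {z : ℝ | a * z ≤ 0},
            z ^ 2 * Real.exp (-(a * Real.sqrt ε * z)) * stdGaussDensity z)
          + (∫ z in {z : ℝ | 0 < a * z}, z ^ 2 * stdGaussDensity z)
          - 1|
        ≤ C * Real.sqrt ε := by
  set G : ℝ → ℝ := fun z => (1 + |z| ^ 3) * Real.exp |z| * stdGaussDensity z with hG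
  have hGnn : ∀ z, 0 ≤ G z := fun z => by
    have := stdGauss_nonneg z
    have := abs_nonneg z
    have := (Real.exp_pos (|z|)).le
    positivity
  have iG : Integrable G := integrable_G
  set K := ∫ z, G z with hK
  have hK0 : 0 ≤ K := integral_nonneg fun z => hGnn z
  refine ⟨M * (K + 1), by positivity, min 1 (M⁻¹ ^ 2), by positivity, ?_⟩
  intro ε a hε hεlt ha
  set b := a * Real.sqrt ε with hb
  have hsq : 0 < Real.sqrt ε := Real.sqrt_pos.2 hε
  have hMε : M * Real.sqrt ε ≤ 1 := by
    have h1 : ε ≤ M⁻¹ ^ 2 := le_of_lt (lt_of_lt_of_le hεlt (min_le_right _ _))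
    have h2 : Real.sqrt ε ≤ M⁻¹ := by
      rw [show M⁻¹ = Real.sqrt (M⁻¹ ^ 2) by rw [Real.sqrt_sq (by positivity)]]
      exact Real.sqrt_le_sqrt h1
    calc M * Real.sqrt ε ≤ M * M⁻¹ := by nlinarith
      _ = 1 := mul_inv_cancel₀ hM.ne'
  have hbabs : |b| ≤ M * Real.sqrt ε := by
    rw [hb, abs_mul, abs_of_nonneg hsq.le]
    exact mul_le_mul_of_nonneg_right ha hsq.le
  have hb1 : |b| ≤ 1 := hbabs.trans hMε
  set S : Set ℝ := {z | a * z ≤ 0} with hS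
  have hSm : MeasurableSet S := measurableSet_le (measurable_id.const_mul a) measurable_const
  have hScompl : {z : ℝ | 0 < a * z} = Sᶜ := by
    ext z; simp [hS, not_le]
  set F : ℝ → ℝ := fun z => z ^ 2 * Real.exp (-(b * z)) * stdGaussDensity z with hF
  -- exp bound everywhere
  have hexpb : ∀ z : ℝ, Real.exp (-(b * z)) ≤ Real.exp |z| := by
    intro z
    apply Real.exp_le_exp.2
    calc -(b * z) ≤ |b * z| := neg_le_abs _
      _ = |b| * |z| := abs_mul _ _
      _ ≤ 1 * |z| := mul_le_mul_of_nonneg_right hb1 (abs_nonneg z)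
      _ = |z| := one_mul _
  have iF : IntegrableOn F S := by
    apply Integrable.mono' iG.integrableOn
    · apply Continuous.aestronglyMeasurable; fun_prop
    · filter_upwards with z
      have hφ := stdGauss_nonneg z
      rw [Real.norm_eq_abs, abs_of_nonneg (by have := (Real.exp_pos (-(b*z))).le; positivity)]
      calc z ^ 2 * Real.exp (-(b * z)) * stdGaussDensity z
          ≤ z ^ 2 * Real.exp |z| * stdGaussDensity z := by
            apply mul_le_mul_of_nonneg_right _ hφ
            exact mul_le_mul_of_nonneg_left (hexpb z) (sq_nonneg z)
        _ ≤ (1 + |z| ^ 3) * Real.exp |z| * stdGaussDensity z := by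
            apply mul_le_mul_of_nonneg_right _ hφ
            exact mul_le_mul_of_nonneg_right (sq_le_one_add_abs_cube z) (Real.exp_pos _).le
  set f : ℝ → ℝ := fun z => z ^ 2 * (Real.exp (-(b * z)) - 1) * stdGaussDensity z with hf
  have hfeq : (fun z => F z - z ^ 2 * stdGaussDensity z) = f := by
    funext z; simp only [hF, hf]; ring
  have ibd : IntegrableOn f S := hfeq ▸ (iF.sub integrable_sq_gauss.integrableOn)
  have hdiff : (∫ z in S, F z) - (∫ z in S, z ^ 2 * stdGaussDensity z) = ∫ z in S, f z := by
    rw [← integral_sub iF integrable_sq_gauss.integrableOn, ← hfeq]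
  -- pointwise bound on S
  have hpt : ∀ z ∈ S, |f z| ≤ (M * Real.sqrt ε) * G z := by
    intro z hz
    have hφ := stdGauss_nonneg z
    have hbz : b * z ≤ 0 := by
      have : a * z ≤ 0 := hz
      calc b * z = Real.sqrt ε * (a * z) := by rw [hb]; ring
        _ ≤ 0 := mul_nonpos_of_nonneg_of_nonpos hsq.le this
    have ht0 : 0 ≤ -(b * z) := by linarith
    have h1 : Real.exp (-(b * z)) - 1 ≤ (-(b * z)) * Real.exp (-(b * z)) :=
      exp_sub_one_le_mul ht0
    have h2 : -(b * z) ≤ (M * Real.sqrt ε) * |z| := by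
      calc -(b * z) ≤ |b * z| := neg_le_abs _
        _ = |b| * |z| := abs_mul _ _
        _ ≤ (M * Real.sqrt ε) * |z| := mul_le_mul_of_nonneg_right hbabs (abs_nonneg z)
    have h3 : Real.exp (-(b * z)) ≤ Real.exp |z| := hexpb z
    have h4 : Real.exp (-(b * z)) - 1 ≤ (M * Real.sqrt ε) * |z| * Real.exp |z| := by
      calc Real.exp (-(b * z)) - 1 ≤ (-(b * z)) * Real.exp (-(b * z)) := h1
        _ ≤ ((M * Real.sqrt ε) * |z|) * Real.exp |z| :=
            mul_le_mul h2 h3 (Real.exp_pos _).le (by positivity)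
        _ = (M * Real.sqrt ε) * |z| * Real.exp |z| := by ring
    have hfnn : 0 ≤ Real.exp (-(b * z)) - 1 := by
      have := Real.one_le_exp ht0; linarith
    have habsf : |f z| = z ^ 2 * (Real.exp (-(b * z)) - 1) * stdGaussDensity z := by
      rw [hf]; exact abs_of_nonneg (by positivity)
    rw [habsf]
    have hcube : |z| * z ^ 2 = |z| ^ 3 := by
      rw [← sq_abs z]; ring
    calc z ^ 2 * (Real.exp (-(b * z)) - 1) * stdGaussDensity z
        ≤ z ^ 2 * ((M * Real.sqrt ε) * |z| * Real.exp |z|) * stdGaussDensity z := by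
          apply mul_le_mul_of_nonneg_right _ hφ
          exact mul_le_mul_of_nonneg_left h4 (sq_nonneg z)
      _ = (M * Real.sqrt ε) * ((|z| * z ^ 2) * Real.exp |z| * stdGaussDensity z) := by ring
      _ = (M * Real.sqrt ε) * (|z| ^ 3 * Real.exp |z| * stdGaussDensity z) := by rw [hcube]
      _ ≤ (M * Real.sqrt ε) * ((1 + |z| ^ 3) * Real.exp |z| * stdGaussDensity z) := by
          apply mul_le_mul_of_nonneg_left _ (by positivity)
          apply mul_le_mul_of_nonneg_right _ hφ
          apply mul_le_mul_of_nonneg_right _ (Real.exp_pos _).le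
          linarith
      _ = (M * Real.sqrt ε) * G z := by rw [hG]
  -- main bound
  have hbound : |∫ z in S, f z| ≤ (M * Real.sqrt ε) * K := by
    have step1 : |∫ z in S, f z| ≤ ∫ z in S, |f z| := by
      simpa [Real.norm_eq_abs] using norm_integral_le_integral_norm (μ := volume.restrict S) f
    have step2 : ∫ z in S, |f z| ≤ ∫ z in S, (M * Real.sqrt ε) * G z :=
      setIntegral_mono_on ibd.abs ((iG.integrableOn).const_mul _) hSm
        (fun z hz => hpt z hz)
    have step3 : ∫ z in S, (M * Real.sqrt ε) * G z = (M * Real.sqrt ε) * ∫ z in S, G z :=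
      integral_const_mul _ _
    have step4 : ∫ z in S, G z ≤ K :=
      setIntegral_le_integral iG (Filter.Eventually.of_forall hGnn)
    have : (M * Real.sqrt ε) * (∫ z in S, G z) ≤ (M * Real.sqrt ε) * K :=
      mul_le_mul_of_nonneg_left step4 (by positivity)
    linarith [step1, step2, step3 ▸ step2]
  -- assemble
  have hsplit : (∫ z in S, z ^ 2 * stdGaussDensity z)
      + (∫ z in Sᶜ, z ^ 2 * stdGaussDensity z) = 1 := by
    rw [integral_add_compl hSm integrable_sq_gauss, stdGauss_moment]
  have hId : (∫ z in S, F z) + (∫ z in {z : ℝ | 0 < a * z}, z ^ 2 * stdGaussDensity z) - 1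
      = ∫ z in S, f z := by
    rw [hScompl, ← hdiff]
    linarith [hsplit]
  calc |(∫ z in {z : ℝ | a * z ≤ 0},
            z ^ 2 * Real.exp (-(a * Real.sqrt ε * z)) * stdGaussDensity z)
          + (∫ z in {z : ℝ | 0 < a * z}, z ^ 2 * stdGaussDensity z) - 1|
      = |∫ z in S, f z| := by rw [← hId]
    _ ≤ (M * Real.sqrt ε) * K := hbound
    _ ≤ (M * (K + 1)) * Real.sqrt ε := by nlinarith [hsq.le]
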